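/- In Myerson's three-person game, the degenerate distribution placing probability one on (y_1, y_2, y_3) is a correlated perfect equilibrium. -/

import Mathlib

open Finset Filter Topology

/-- Strategy profiles: player 1 and 2 choose in `Fin 3` (0 = x, 1 = y, 2 = z),
player 3 chooses in `Fin 2` (0 = x₃, 1 = y₃). -/
abbrev Prof : Type := Fin 3 × Fin 3 × Fin 2

/-- Player 1's payoff in Myerson's three-person game. -/
noncomputable def u1 : Prof → ℝ :=
  fun p => if p.2.2 = 1 then 3 else !![1, 2, 2; 0, 3, 0; 0, 0, 3] p.1 p.2.1

/-- Player 2's payoff. -/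
noncomputable def u2 : Prof → ℝ :=
  fun p => if p.2.2 = 1 then 3 else !![1, 0, 0; 2, 0, 3; 2, 3, 0] p.1 p.2.1

/-- Player 3's payoff. -/
noncomputable def u3 : Prof → ℝ :=
  fun p => if p.2.2 = 1 then 1 else if p.1 = 0 ∧ p.2.1 = 0 then 2 else 0

def IsDist3 (ρ : Prof → ℝ) : Prop := (∀ p, 0 ≤ ρ p) ∧ ∑ p, ρ p = 1

def Mixed3 (ρ : Prof → ℝ) : Prop := ∀ p, 0 < ρ p

def marg1 (ρ : Prof → ℝ) (a : Fin 3) : ℝ := ∑ b : Fin 3, ∑ c : Fin 2, ρ (a, b, c)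
def marg2 (ρ : Prof → ℝ) (b : Fin 3) : ℝ := ∑ a : Fin 3, ∑ c : Fin 2, ρ (a, b, c)
def marg3 (ρ : Prof → ℝ) (c : Fin 2) : ℝ := ∑ a : Fin 3, ∑ b : Fin 3, ρ (a, b, c)

/-- Correlated perfect equilibrium of Myerson's game: a completely mixed sequence
converging to `ρ` along which every recommendation in the support stays optimal. -/
def IsCPE3 (ρ : Prof → ℝ) : Prop :=
  IsDist3 ρ ∧ ∃ ρk : ℕ → Prof → ℝ,
    (∀ k, IsDist3 (ρk k) ∧ Mixed3 (ρk k)) ∧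
    (∀ p, Tendsto (fun k => ρk k p) atTop (𝓝 (ρ p))) ∧
    (∀ k a, 0 < marg1 ρ a → ∀ a',
      ∑ b : Fin 3, ∑ c : Fin 2, ρk k (a, b, c) * u1 (a', b, c) ≤
        ∑ b : Fin 3, ∑ c : Fin 2, ρk k (a, b, c) * u1 (a, b, c)) ∧
    (∀ k b, 0 < marg2 ρ b → ∀ b',
      ∑ a : Fin 3, ∑ c : Fin 2, ρk k (a, b, c) * u2 (a, b', c) ≤
        ∑ a : Fin 3, ∑ c : Fin 2, ρk k (a, b, c) * u2 (a, b, c)) ∧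
    (∀ k c, 0 < marg3 ρ c → ∀ c',
      ∑ a : Fin 3, ∑ b : Fin 3, ρk k (a, b, c) * u3 (a, b, c') ≤
        ∑ a : Fin 3, ∑ b : Fin 3, ρk k (a, b, c) * u3 (a, b, c))

/-- Weights: 1 on (y₁,y₂,y₃), 3ε on (y₁,y₂,x₃), 7ε on (z₁,y₂,x₃), ε otherwise. -/
noncomputable def wgt (ε : ℝ) (p : Prof) : ℝ :=
  if p = (1, 1, 1) then 1 else if p = (1, 1, 0) then 3 * ε
  else if p = (2, 1, 0) then 7 * ε else ε

noncomputable def eps (k : ℕ) : ℝ := ((k : ℝ) + 1)⁻¹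

lemma eps_pos (k : ℕ) : 0 < eps k := by unfold eps; positivity

lemma eps_tendsto : Filter.Tendsto eps Filter.atTop (nhds 0) := by
  have := tendsto_one_div_add_atTop_nhds_zero_nat (𝕜 := ℝ)
  simp only [one_div] at this
  exact this.congr (fun k => by simp [eps])

noncomputable def ρseq (k : ℕ) (p : Prof) : ℝ := (1 + 25 * eps k)⁻¹ * wgt (eps k) p

/-- The degenerate distribution on `(y₁, y₂, y₃)` is a correlated perfect equilibrium of
Myerson's three-person game. -/
theorem myerson_delta_yyy_isCPE :
    IsCPE3 (fun p => if p = (1, 1, 1) then 1 else 0) := by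
  refine ⟨⟨fun p => ?_, ?_⟩, ρseq, fun k => ?_, fun p => ?_, ?_, ?_, ?_⟩
  · dsimp only; split <;> norm_num
  · simp +decide [Fintype.sum_prod_type, Fin.sum_univ_three, Fin.sum_univ_two]
  · -- distribution and full mixing
    have hε := eps_pos k
    have hDi : (0:ℝ) < (1 + 25 * eps k)⁻¹ := by positivity
    refine ⟨⟨fun p => ?_, ?_⟩, fun p => ?_⟩
    · unfold ρseq wgt; split_ifs <;> positivity
    · simp +decide only [ρseq, wgt, Fintype.sum_prod_type, Fin.sum_univ_three,
        Fin.sum_univ_two, if_true, if_false]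
      field_simp
      ring
    · unfold ρseq wgt; split_ifs <;> positivity
  · -- convergence
    have h1 : Filter.Tendsto (fun k => wgt (eps k) p) Filter.atTop (nhds (wgt 0 p)) := by
      have hc : Continuous fun ε => wgt ε p := by
        unfold wgt; split_ifs <;> continuity
      exact (hc.tendsto 0).comp eps_tendsto
    have h2 : Filter.Tendsto (fun k => (1 + 25 * eps k)) Filter.atTop (nhds 1) := by
      have := (eps_tendsto.const_mul (25:ℝ)).const_add 1
      simpa using this
    have h3 := (h2.inv₀ (by norm_num)).mul h1
    simp only [inv_one, one_mul] at h3
    have hw0 : wgt 0 p = (if p = (1, 1, 1) then (1:ℝ) else 0) := by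
      unfold wgt; split_ifs <;> norm_num
    rw [hw0] at h3
    exact h3
  · -- player 1
    intro k a ha a'
    have hε := eps_pos k
    have hDi : (0:ℝ) < (1 + 25 * eps k)⁻¹ := by positivity
    have hq : (0:ℝ) ≤ eps k * (1 + eps k * 25)⁻¹ := by positivity
    fin_cases a
    · exfalso
      simp +decide [marg1, Fin.sum_univ_three, Fin.sum_univ_two] at ha
    · fin_cases a' <;>
      · simp +decide only [ρseq, wgt, u1, Fin.sum_univ_three, Fin.sum_univ_two,
          if_true, if_false]
        norm_num [Matrix.cons_val_zero, Matrix.cons_val_one, Matrix.head_cons,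
          Matrix.vecHead, Matrix.vecTail, Matrix.cons_val', Matrix.empty_val',
          Matrix.cons_val_fin_one, Matrix.cons_val_two]
        try (ring_nf; nlinarith [hq, hε, hDi])
    · exfalso
      simp +decide [marg1, Fin.sum_univ_three, Fin.sum_univ_two] at ha
  · -- player 2
    intro k b hb b'
    have hε := eps_pos k
    have hDi : (0:ℝ) < (1 + 25 * eps k)⁻¹ := by positivity
    have hq : (0:ℝ) ≤ eps k * (1 + eps k * 25)⁻¹ := by positivity
    fin_cases b
    · exfalso
      simp +decide [marg2, Fin.sum_univ_three, Fin.sum_univ_two] at hb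
    · fin_cases b' <;>
      · simp +decide only [ρseq, wgt, u2, Fin.sum_univ_three, Fin.sum_univ_two,
          if_true, if_false]
        norm_num [Matrix.cons_val_zero, Matrix.cons_val_one, Matrix.head_cons,
          Matrix.vecHead, Matrix.vecTail, Matrix.cons_val', Matrix.empty_val',
          Matrix.cons_val_fin_one, Matrix.cons_val_two]
        try (ring_nf; nlinarith [hq, hε, hDi])
    · exfalso
      simp +decide [marg2, Fin.sum_univ_three, Fin.sum_univ_two] at hb
  · -- player 3
    intro k c hc c'
    have hε := eps_pos k
    have hDi : (0:ℝ) < (1 + 25 * eps k)⁻¹ := by positivity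
    have hq : (0:ℝ) ≤ eps k * (1 + eps k * 25)⁻¹ := by positivity
    fin_cases c
    · exfalso
      simp +decide [marg3, Fin.sum_univ_three, Fin.sum_univ_two] at hc
    · fin_cases c' <;>
      · simp +decide only [ρseq, wgt, u3, Fin.sum_univ_three, Fin.sum_univ_two,
          if_true, if_false]
        norm_num
        try (ring_nf; nlinarith [hq, hε, hDi])
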